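/- Let F₁ and F₂ be saturated FDFAs with leading automata Q₁, Q₂ and progress DFAs P¹_q, P²_q. Define H as the FDFA with leading automaton Q₁ × Q₂ and, for each state (q₁,q₂), the progress DFA P¹_{q₁} ⊗ P²_{q₂} (product DFA accepting the intersection of the two DFA languages). Then L(H) = L(F₁) ∩ L(F₂), and H is saturated. -/

import Mathlib

open Classical

/-- `wpow v n` is the word `v` repeated `n` times. -/
def wpow {α : Type} (v : List α) : ℕ → List α
  | 0 => []
  | n + 1 => wpow v n ++ v

/-- The ultimately periodic infinite word `u·v^ω` (meaningful when `v ≠ []`). -/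
def upWord {α : Type} [Inhabited α] (u v : List α) : ℕ → α := fun n =>
  if n < u.length then u.getD n default
  else v.getD ((n - u.length) % v.length) default

/-- `l` is a prefix of the infinite word `w`. -/
def prefOf {α : Type} [Inhabited α] (l : List α) (w : ℕ → α) : Prop :=
  ∀ i < l.length, w i = l.getD i default

/-- A complete deterministic automaton (no acceptance condition). -/
structure DetAuto (α : Type) : Type 1 where
  State : Type
  [fin : Fintype State]
  init : State
  step : State → α → State

attribute [instance] DetAuto.fin

namespace DetAuto

variable {α : Type}

/-- The state reached from `q` after reading the finite word `w`. -/
def run (A : DetAuto α) (q : A.State) (w : List α) : A.State := w.foldl A.step q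

/-- The state reached from the initial state after reading `w`. -/
def eval (A : DetAuto α) (w : List α) : A.State := A.run A.init w

/-- The (infinite) run of `A` on an infinite word `w`. -/
def runSeq (A : DetAuto α) (w : ℕ → α) : ℕ → A.State
  | 0 => A.init
  | n + 1 => A.step (A.runSeq w n) (w n)

lemma exists_rep (A : DetAuto α) (u v : List α) :
    ∃ i, ∃ j, 1 ≤ j ∧ A.eval (u ++ wpow v i) = A.eval (u ++ wpow v (i + j)) := by
  obtain ⟨a, b, hab, hfab⟩ :=
    Finite.exists_ne_map_eq_of_infinite (fun n : ℕ => A.eval (u ++ wpow v n))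
  rcases Nat.lt_or_gt_of_ne hab with h | h
  · exact ⟨a, b - a, by omega, by rw [Nat.add_sub_cancel' h.le]; exact hfab⟩
  · exact ⟨b, a - b, by omega, by rw [Nat.add_sub_cancel' h.le]; exact hfab.symm⟩

/-- The least `i` in the normalization of `(u,v)` w.r.t. `A`. -/
noncomputable def normI (A : DetAuto α) (u v : List α) : ℕ :=
  Nat.find (A.exists_rep u v)

lemma normI_spec (A : DetAuto α) (u v : List α) :
    ∃ j, 1 ≤ j ∧ A.eval (u ++ wpow v (A.normI u v))
      = A.eval (u ++ wpow v (A.normI u v + j)) :=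
  Nat.find_spec (A.exists_rep u v)

/-- The least `j` in the normalization of `(u,v)` w.r.t. `A`. -/
noncomputable def normJ (A : DetAuto α) (u v : List α) : ℕ :=
  Nat.find (A.normI_spec u v)

/-- The normalization `(x, y) = (u·v^i, v^j)` of `(u,v)` w.r.t. `A`. -/
noncomputable def normalize (A : DetAuto α) (u v : List α) : List α × List α :=
  (u ++ wpow v (A.normI u v), wpow v (A.normJ u v))

/-- The product automaton. -/
def prod (A B : DetAuto α) : DetAuto α where
  State := A.State × B.State
  init := (A.init, B.init)
  step := fun p σ => (A.step p.1 σ, B.step p.2 σ)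

end DetAuto

/-- A family of DFAs: a leading automaton and a progress DFA for each of its states. -/
structure FDFA (α : Type) : Type 1 where
  leading : DetAuto α
  pState : leading.State → Type
  [pFin : ∀ q, Fintype (pState q)]
  pInit : ∀ q, pState q
  pStep : ∀ q, pState q → α → pState q
  pAcc : ∀ q, Set (pState q)

attribute [instance] FDFA.pFin

namespace FDFA

variable {α : Type}

/-- The progress DFA at state `q` accepts the finite word `y`. -/
def progAccept (F : FDFA α) (q : F.leading.State) (y : List α) : Prop :=
  y.foldl (F.pStep q) (F.pInit q) ∈ F.pAcc q

/-- `F` accepts the pair `(u, v)`: with `(x,y)` the normalization of `(u,v)` w.r.t.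
the leading automaton, the progress DFA at the state reached on `x` accepts `y`. -/
noncomputable def Accept (F : FDFA α) (u v : List α) : Prop :=
  F.progAccept (F.leading.eval (F.leading.normalize u v).1) (F.leading.normalize u v).2

/-- `F` is saturated: acceptance of `(u,v)` depends only on the infinite word `u·v^ω`. -/
def Saturated [Inhabited α] (F : FDFA α) : Prop :=
  ∀ u v u' v' : List α, v ≠ [] → v' ≠ [] → upWord u v = upWord u' v' →
    (F.Accept u v ↔ F.Accept u' v')

/-- The complement FDFA: same structure, complemented accepting states. -/
def compl (F : FDFA α) : FDFA α :=
  { F with pAcc := fun q => (F.pAcc q)ᶜ }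

end FDFA

/-- The intersection-product FDFA: product leading automaton, product progress DFAs with
accepting states `F₁ × F₂`. -/
def FDFA.inter {α : Type} (F G : FDFA α) : FDFA α where
  leading := F.leading.prod G.leading
  pState := fun q => F.pState q.1 × G.pState q.2
  pInit := fun q => (F.pInit q.1, G.pInit q.2)
  pStep := fun q p σ => (F.pStep q.1 p.1 σ, G.pStep q.2 p.2 σ)
  pAcc := fun q => {p | p.1 ∈ F.pAcc q.1 ∧ p.2 ∈ G.pAcc q.2}

section Aux

variable {α : Type}

lemma wpow_length (v : List α) (n : ℕ) : (wpow v n).length = n * v.length := by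
  induction n with
  | zero => simp [wpow]
  | succ n ih => simp [wpow, ih]; ring

lemma wpow_add (v : List α) (a b : ℕ) : wpow v (a + b) = wpow v a ++ wpow v b := by
  induction b with
  | zero => simp [wpow]
  | succ b ih => simp [wpow, ← Nat.add_assoc, ih]

lemma wpow_one (v : List α) : wpow v 1 = v := by simp [wpow]

lemma wpow_getD (v : List α) (n m : ℕ) (d : α) (hm : m < n * v.length) :
    (wpow v n).getD m d = v.getD (m % v.length) d := by
  induction n with
  | zero => omega
  | succ n ih =>
    have hm' : m < n * v.length + v.length := by rw [Nat.succ_mul] at hm; exact hm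
    by_cases h : m < n * v.length
    · rw [wpow, List.getD_append _ _ _ _ (by rw [wpow_length]; exact h)]
      exact ih h
    · have hv : 0 < v.length := by
        rcases Nat.eq_zero_or_pos v.length with h0 | h0
        · rw [h0] at hm'; omega
        · exact h0
      rw [wpow, List.getD_append_right _ _ _ _ (by rw [wpow_length]; omega)]
      rw [wpow_length]
      congr 1
      have : m % v.length = (m - n * v.length) % v.length := by
        conv_lhs => rw [show m = (m - n * v.length) + n * v.length by omega]
        rw [Nat.add_mul_mod_self_right]
      rw [this, Nat.mod_eq_of_lt (by omega)]

lemma upWord_append_self [Inhabited α] (u v : List α) (hv : v ≠ []) :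
    upWord (u ++ v) v = upWord u v := by
  have hv' : 0 < v.length := List.length_pos_iff.mpr hv
  funext n
  unfold upWord
  by_cases h1 : n < u.length
  · rw [if_pos (by simp; omega), if_pos h1, List.getD_append _ _ _ _ h1]
  · by_cases h2 : n < u.length + v.length
    · rw [if_pos (by simp; omega), if_neg h1,
        List.getD_append_right _ _ _ _ (by omega)]
      congr 1
      exact (Nat.mod_eq_of_lt (by omega)).symm
    · rw [if_neg (by simp; omega), if_neg h1]
      congr 1
      simp only [List.length_append]
      have : n - u.length = (n - (u.length + v.length)) + v.length := by omega
      rw [this, Nat.add_mod_right]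

lemma upWord_append_wpow [Inhabited α] (u v : List α) (hv : v ≠ []) (i : ℕ) :
    upWord (u ++ wpow v i) v = upWord u v := by
  induction i with
  | zero => simp [wpow]
  | succ i ih =>
    rw [wpow, ← List.append_assoc, upWord_append_self _ _ hv, ih]

lemma upWord_wpow [Inhabited α] (u v : List α) (hv : v ≠ []) (j : ℕ) (hj : 1 ≤ j) :
    upWord u (wpow v j) = upWord u v := by
  have hv' : 0 < v.length := List.length_pos_iff.mpr hv
  funext n
  unfold upWord
  by_cases h1 : n < u.length
  · rw [if_pos h1, if_pos h1]
  · rw [if_neg h1, if_neg h1, wpow_length]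
    rw [wpow_getD v j _ _ (by rw [← wpow_length]; exact Nat.mod_lt _ (by rw [wpow_length]; positivity))]
    rw [Nat.mod_mod_of_dvd _ ⟨j, by ring⟩]

namespace DetAuto

lemma eval_append (A : DetAuto α) (x y : List α) :
    A.eval (x ++ y) = A.run (A.eval x) y := by
  simp [eval, run, List.foldl_append]

lemma run_prod (A B : DetAuto α) (p : A.State) (q : B.State) (w : List α) :
    (A.prod B).run (p, q) w = (A.run p w, B.run q w) := by
  induction w generalizing p q with
  | nil => rfl
  | cons a w ih => simp [run, prod] at ih ⊢; exact ih _ _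

lemma eval_prod (A B : DetAuto α) (w : List α) :
    (A.prod B).eval w = (A.eval w, B.eval w) := by
  simp [eval, prod, ← run_prod]

end DetAuto

/-- Key lemma: if `(x, y)` is already "stable" for the leading automaton
(`eval (x ++ y) = eval x`), then acceptance is just progress-acceptance at `eval x`. -/
lemma FDFA.accept_of_stable (F : FDFA α) (x y : List α)
    (h : F.leading.eval (x ++ y) = F.leading.eval x) :
    F.Accept x y ↔ F.progAccept (F.leading.eval x) y := by
  have hI : F.leading.normI x y = 0 := by
    rw [DetAuto.normI, Nat.find_eq_zero]
    exact ⟨1, le_refl 1, by simp [wpow, wpow_one, h]⟩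
  have hJ : F.leading.normJ x y = 1 := by
    rw [DetAuto.normJ, Nat.find_eq_iff]
    constructor
    · refine ⟨le_refl 1, ?_⟩
      rw [hI]
      simp [wpow, wpow_one, h]
    · intro m hm
      interval_cases m
      simp
  unfold FDFA.Accept DetAuto.normalize
  rw [hI, hJ]
  simp [wpow, wpow_one]

lemma FDFA.inter_progAccept (F G : FDFA α) (q₁ : F.leading.State) (q₂ : G.leading.State)
    (y : List α) :
    (F.inter G).progAccept (q₁, q₂) y ↔ F.progAccept q₁ y ∧ G.progAccept q₂ y := by
  unfold FDFA.progAccept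
  have : ∀ (p₁ : F.pState q₁) (p₂ : G.pState q₂),
      y.foldl ((F.inter G).pStep (q₁, q₂)) (p₁, p₂)
        = (y.foldl (F.pStep q₁) p₁, y.foldl (G.pStep q₂) p₂) := by
    induction y with
    | nil => intro p₁ p₂; rfl
    | cons a y ih => intro p₁ p₂; simp only [List.foldl_cons]; exact ih _ _
  rw [show (F.inter G).pInit (q₁, q₂) = (F.pInit q₁, G.pInit q₂) from rfl, this]
  rfl

end Aux

/-- For saturated FDFAs `F₁, F₂`, the product FDFA `H` with accepting
sets `F¹ × F²` recognizes `L(F₁) ∩ L(F₂)`, and `H` is saturated. -/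
theorem fdfa_inter_correct {α : Type} [Inhabited α] (F₁ F₂ : FDFA α)
    (h₁ : F₁.Saturated) (h₂ : F₂.Saturated) :
    (∀ u v : List α, v ≠ [] →
      ((F₁.inter F₂).Accept u v ↔ F₁.Accept u v ∧ F₂.Accept u v)) ∧
    (F₁.inter F₂).Saturated := by
  have key : ∀ u v : List α, v ≠ [] →
      ((F₁.inter F₂).Accept u v ↔ F₁.Accept u v ∧ F₂.Accept u v) := by
    intro u v hv
    set A := (F₁.inter F₂).leading with hA
    set i := A.normI u v with hi
    set j := A.normJ u v with hj
    set x := u ++ wpow v i with hx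
    set y := wpow v j with hy
    obtain ⟨hj1, hspec⟩ := Nat.find_spec (A.normI_spec u v)
    have hstab : A.eval (x ++ y) = A.eval x := by
      rw [hx, hy, List.append_assoc, ← wpow_add]
      exact hspec.symm
    have hAprod : A = F₁.leading.prod F₂.leading := rfl
    have hstab₁ : F₁.leading.eval (x ++ y) = F₁.leading.eval x := by
      have := hstab
      rw [hAprod, DetAuto.eval_prod, DetAuto.eval_prod] at this
      exact congrArg Prod.fst this
    have hstab₂ : F₂.leading.eval (x ++ y) = F₂.leading.eval x := by
      have := hstab
      rw [hAprod, DetAuto.eval_prod, DetAuto.eval_prod] at this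
      exact congrArg Prod.snd this
    have hy_ne : y ≠ [] := by
      have : 0 < y.length := by
        rw [hy, wpow_length]
        have : 0 < v.length := List.length_pos_iff.mpr hv
        positivity
      exact List.ne_nil_of_length_pos this
    have hup : upWord u v = upWord x y := by
      rw [hy, upWord_wpow x v hv j hj1, hx, upWord_append_wpow u v hv i]
    have hacc : (F₁.inter F₂).Accept u v ↔
        (F₁.inter F₂).progAccept (A.eval x) y := Iff.rfl
    have e1 : (A.eval x).1 = F₁.leading.eval x :=
      congrArg Prod.fst (DetAuto.eval_prod F₁.leading F₂.leading x)
    have e2 : (A.eval x).2 = F₂.leading.eval x :=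
      congrArg Prod.snd (DetAuto.eval_prod F₁.leading F₂.leading x)
    rw [hacc,
      show (F₁.inter F₂).progAccept (A.eval x) y ↔
          F₁.progAccept (A.eval x).1 y ∧ F₂.progAccept (A.eval x).2 y from
        FDFA.inter_progAccept F₁ F₂ (A.eval x).1 (A.eval x).2 y,
      e1, e2,
      ← FDFA.accept_of_stable F₁ x y hstab₁, ← FDFA.accept_of_stable F₂ x y hstab₂,
      ← h₁ u v x y hv hy_ne hup, ← h₂ u v x y hv hy_ne hup]
  refine ⟨key, ?_⟩
  intro u v u' v' hv hv' heq
  rw [key u v hv, key u' v' hv', h₁ u v u' v' hv hv' heq, h₂ u v u' v' hv hv' heq]
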